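/- arXiv:2603.04681 — 2 statements merged into one kernel-verified Lean document; each statement's English description precedes it below -/
import Mathlib

section
/- Suppose the kernel K satisfies Assumption A.2′, and let f = g ∘ K where g is Lipschitz continuous on the range of K with g(0) = 0. Then for any fixed j ∈ ℕ and any 0 ≤ a ≤ b ≤ 1 there exists a constant C < ∞ such that, uniformly in x ∈ [0,1] and for all sufficiently large T, both |T^{-1} Σ_{i: i/T∈[a,b]} f((i/T − x)/h)((i/T − x)/h)^j − ∫_a^b f((u − x)/h)((u − x)/h)^j du| ≤ C/T and |T^{-1} Σ_{i: i/T∈[a,b]} f((i/T − x)/h)|(i/T − x)/h|^j − ∫_a^b f((u − x)/h)|(u − x)/h|^j du| ≤ C/T, where h = h_T > 0 satisfies h → 0 and Th → ∞. -/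
open Filter Set MeasureTheory

open scoped Classical

lemma count_aux {s : Finset ℕ} {α β : ℝ} (h0 : 0 ≤ β - α + 1)
    (hs : ∀ i ∈ s, α ≤ (i : ℝ) ∧ (i : ℝ) ≤ β) : (s.card : ℝ) ≤ β - α + 1 := by
  rcases s.eq_empty_or_nonempty with rfl | ⟨i0, hi0⟩
  · simpa using h0
  · have hβ : 0 ≤ β := le_trans (Nat.cast_nonneg i0) (hs i0 hi0).2
    have hsub : s ⊆ Finset.Icc ⌈α⌉₊ ⌊β⌋₊ := by
      intro i hi
      rcases hs i hi with ⟨h1, h2⟩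
      exact Finset.mem_Icc.2 ⟨Nat.ceil_le.2 h1, Nat.le_floor h2⟩
    have hcard : s.card ≤ (Finset.Icc ⌈α⌉₊ ⌊β⌋₊).card := Finset.card_le_card hsub
    rw [Nat.card_Icc] at hcard
    rcases le_or_gt ⌈α⌉₊ (⌊β⌋₊ + 1) with hle | hlt
    · have hc2 : (s.card : ℝ) ≤ ((⌊β⌋₊ + 1 - ⌈α⌉₊ : ℕ) : ℝ) := by exact_mod_cast hcard
      rw [Nat.cast_sub hle] at hc2
      have h1 : (⌊β⌋₊ : ℝ) ≤ β := Nat.floor_le hβ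
      have h2 : α ≤ (⌈α⌉₊ : ℝ) := Nat.le_ceil α
      push_cast at hc2
      linarith
    · have hz : ⌊β⌋₊ + 1 - ⌈α⌉₊ = 0 := Nat.sub_eq_zero_of_le hlt.le
      rw [hz, Nat.le_zero] at hcard
      rw [hcard]
      simpa using h0

lemma pow_diff_aux (j : ℕ) {R t s : ℝ} (ht : |t| ≤ R) (hs : |s| ≤ R) :
    |t ^ j - s ^ j| ≤ (j : ℝ) * R ^ (j - 1) * |t - s| := by
  have hR : 0 ≤ R := le_trans (abs_nonneg t) ht
  rw [← geom_sum₂_mul t s j, abs_mul]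
  have hb : |∑ i ∈ Finset.range j, t ^ i * s ^ (j - 1 - i)| ≤ (j : ℝ) * R ^ (j - 1) := by
    calc |∑ i ∈ Finset.range j, t ^ i * s ^ (j - 1 - i)|
        ≤ ∑ i ∈ Finset.range j, |t ^ i * s ^ (j - 1 - i)| := Finset.abs_sum_le_sum_abs _ _
      _ ≤ ∑ _i ∈ Finset.range j, R ^ (j - 1) := by
          apply Finset.sum_le_sum
          intro i hi
          have hij : i ≤ j - 1 := Nat.le_sub_one_of_lt (Finset.mem_range.1 hi)
          have : |t ^ i * s ^ (j - 1 - i)| = |t| ^ i * |s| ^ (j - 1 - i) := by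
            rw [abs_mul, abs_pow, abs_pow]
          rw [this]
          calc |t| ^ i * |s| ^ (j - 1 - i) ≤ R ^ i * R ^ (j - 1 - i) := by
                apply mul_le_mul (pow_le_pow_left₀ (abs_nonneg t) ht i)
                  (pow_le_pow_left₀ (abs_nonneg s) hs _) (by positivity) (by positivity)
            _ = R ^ (j - 1) := by rw [← pow_add, Nat.add_sub_cancel' hij]
      _ = (j : ℝ) * R ^ (j - 1) := by
          rw [Finset.sum_const, Finset.card_range, nsmul_eq_mul]
  exact mul_le_mul_of_nonneg_right hb (abs_nonneg _)

lemma cellA {F : ℝ → ℝ} {c d CL : ℝ} (hcd : c ≤ d)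
    (hint : IntegrableOn F (Set.Ioc c d))
    (hlip : ∀ u ∈ Set.Ioc c d, |F d - F u| ≤ CL) :
    |(d - c) * F d - ∫ u in Set.Ioc c d, F u| ≤ CL * (d - c) := by
  have h1 : (d - c) * F d = ∫ _u in Set.Ioc c d, F d := by
    rw [setIntegral_const, measureReal_def, Real.volume_Ioc, ENNReal.toReal_ofReal (by linarith), smul_eq_mul]
  rw [h1, ← integral_sub (μ := volume.restrict (Set.Ioc c d))
    (show IntegrableOn (fun _ => F d) (Set.Ioc c d) volume from
    integrableOn_const measure_Ioc_lt_top.ne) hint]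
  have := norm_setIntegral_le_of_norm_le_const (μ := volume) (s := Set.Ioc c d)
    (f := fun u => F d - F u) measure_Ioc_lt_top
    (fun u hu => by simpa [Real.norm_eq_abs] using hlip u hu)
  rw [Real.norm_eq_abs, measureReal_def, Real.volume_Ioc, ENNReal.toReal_ofReal (by linarith)] at this
  exact this

set_option maxHeartbeats 2000000 in
lemma key_lemma (f : ℝ → ℝ) (hmeas : Measurable f) (L₁ Mf Lf : ℝ) (hL : 0 < L₁)
    (hMf : 0 ≤ Mf) (hLf : 0 ≤ Lf)
    (hbd : ∀ t, |f t| ≤ Mf)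
    (hz : ∀ t, L₁ < |t| → f t = 0)
    (hlipf : ∀ t ∈ Set.Icc (-L₁) L₁, ∀ s ∈ Set.Icc (-L₁) L₁, |f t - f s| ≤ Lf * |t - s|)
    (h : ℝ) (hpos : 0 < h)
    (a b x : ℝ) (ha : 0 ≤ a) (hab : a ≤ b) (hb1 : b ≤ 1)
    (T : ℕ) (hT : 1 ≤ T) :
    |(T : ℝ)⁻¹ * ∑ i ∈ (Finset.Icc 1 T).filter (fun i : ℕ => (i : ℝ) / T ∈ Set.Icc a b),
        f (((i : ℝ) / T - x) / h) -
      ∫ u in Set.Icc a b, f ((u - x) / h)| ≤ (2 * L₁ * Lf + 16 * Mf) / T := by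
  have hTr : (0 : ℝ) < T := by exact_mod_cast Nat.lt_of_lt_of_le Nat.zero_lt_one hT
  set F : ℝ → ℝ := fun u => f ((u - x) / h) with hFdef
  set c : ℕ → ℝ := fun i => ((i : ℝ) - 1) / T with hcdef
  set d : ℕ → ℝ := fun i => (i : ℝ) / T with hddef
  set J : ℕ → Set ℝ := fun i => Set.Ioc a b ∩ Set.Ioc (c i) (d i) with hJdef
  have hcd : ∀ i, c i ≤ d i := fun i => by
    rw [hcdef, hddef]
    exact (div_le_div_iff_of_pos_right hTr).2 (by linarith)
  have hdiff : ∀ i, d i - c i = 1 / T := fun i => by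
    rw [hcdef, hddef, div_sub_div_same]; ring_nf
  have hFmeas : Measurable F := hmeas.comp ((measurable_id.sub_const x).div_const h)
  have hFbd : ∀ u, |F u| ≤ Mf := fun u => hbd _
  have hFint : ∀ s : Set ℝ, volume s ≠ ⊤ → IntegrableOn F s volume := fun s hs =>
    Measure.integrableOn_of_bounded hs hFmeas.aestronglyMeasurable
      (ae_of_all _ fun u => by simpa [Real.norm_eq_abs] using hFbd u)
  have hJsub : ∀ i, J i ⊆ Set.Ioc (c i) (d i) := fun i => inter_subset_right
  have hJfin : ∀ i, volume (J i) < ⊤ :=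
    fun i => lt_of_le_of_lt (measure_mono (hJsub i)) measure_Ioc_lt_top
  have hvol : ∀ i, (volume (Set.Ioc (c i) (d i))).toReal = 1 / (T : ℝ) := fun i => by
    rw [Real.volume_Ioc, hdiff i, ENNReal.toReal_ofReal (by positivity)]
  have hvolJ : ∀ i, (volume (J i)).toReal ≤ 1 / (T : ℝ) := fun i => by
    rw [← hvol i]
    exact ENNReal.toReal_mono measure_Ioc_lt_top.ne (measure_mono (hJsub i))
  have hintJ : ∀ i, |∫ u in J i, F u| ≤ Mf * (1 / (T : ℝ)) := fun i => by
    have h1 := norm_setIntegral_le_of_norm_le_const (μ := volume) (s := J i) (f := F)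
      (hJfin i) (fun u _ => by simpa [Real.norm_eq_abs] using hFbd u)
    rw [Real.norm_eq_abs] at h1
    exact h1.trans (mul_le_mul_of_nonneg_left (hvolJ i) hMf)
  -- decomposition of the integral
  have hunion : Set.Ioc a b = ⋃ i ∈ Finset.Icc 1 T, J i := by
    apply Set.Subset.antisymm
    · intro u hu
      have hu1 : a < u := hu.1
      have hu2 : u ≤ b := hu.2
      have hupos : 0 < u := lt_of_le_of_lt ha hu1
      have huT : 0 < u * T := mul_pos hupos hTr
      have hn1 : 1 ≤ ⌈u * (T : ℝ)⌉₊ := Nat.one_le_ceil_iff.2 huT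
      have hnT : ⌈u * (T : ℝ)⌉₊ ≤ T := Nat.ceil_le.2 (by nlinarith)
      refine Set.mem_biUnion (Finset.mem_Icc.2 ⟨hn1, hnT⟩) ⟨hu, ?_, ?_⟩
      · rw [hcdef]
        rw [div_lt_iff₀ hTr]
        have := Nat.ceil_lt_add_one huT.le
        linarith
      · rw [hddef]
        exact (le_div_iff₀ hTr).2 (Nat.le_ceil _)
    · intro u hu
      simp only [Set.mem_iUnion, exists_prop] at hu
      obtain ⟨i, -, hui⟩ := hu
      exact hui.1
  have hdecomp : (∫ u in Set.Icc a b, F u) = ∑ i ∈ Finset.Icc 1 T, ∫ u in J i, F u := by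
    rw [integral_Icc_eq_integral_Ioc, hunion]
    refine integral_biUnion_finset _ (fun i _ => measurableSet_Ioc.inter measurableSet_Ioc)
      ?_ (fun i _ => hFint _ (hJfin i).ne)
    intro i _ i' _ hne
    have hdisj : Disjoint (Set.Ioc (c i) (d i)) (Set.Ioc (c i') (d i')) := by
      rw [Set.Ioc_disjoint_Ioc]
      rcases hne.lt_or_gt with hlt | hlt
      · have h1 : (i : ℝ) + 1 ≤ i' := by exact_mod_cast Nat.succ_le_of_lt hlt
        have : d i ≤ c i' := by
          rw [hcdef, hddef]; exact (div_le_div_iff_of_pos_right hTr).2 (by linarith)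
        exact le_trans (min_le_left _ _) (le_trans this (le_max_right _ _))
      · have h1 : (i' : ℝ) + 1 ≤ i := by exact_mod_cast Nat.succ_le_of_lt hlt
        have : d i' ≤ c i := by
          rw [hcdef, hddef]; exact (div_le_div_iff_of_pos_right hTr).2 (by linarith)
        exact le_trans (min_le_right _ _) (le_trans this (le_max_left _ _))
    exact hdisj.mono (hJsub i) (hJsub i')
  -- rewrite the sum
  have hsum : (T : ℝ)⁻¹ * ∑ i ∈ (Finset.Icc 1 T).filter
        (fun i : ℕ => (i : ℝ) / T ∈ Set.Icc a b), f (((i : ℝ) / T - x) / h)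
      = ∑ i ∈ Finset.Icc 1 T,
          (if (i : ℝ) / (T : ℝ) ∈ Set.Icc a b then (T : ℝ)⁻¹ * F (d i) else 0) := by
    rw [show (∑ i ∈ (Finset.Icc 1 T : Finset ℕ),
          (if (i : ℝ) / (T : ℝ) ∈ Set.Icc a b then (T : ℝ)⁻¹ * F (d i) else 0))
        = ∑ i ∈ ((Finset.Icc 1 T : Finset ℕ)).filter
            (fun i : ℕ => (i : ℝ) / (T : ℝ) ∈ Set.Icc a b),
          (T : ℝ)⁻¹ * F (d i) from (Finset.sum_filter _ _).symm]
    rw [Finset.mul_sum]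
  set E : ℕ → ℝ := fun i =>
    (if (i : ℝ) / (T : ℝ) ∈ Set.Icc a b then (T : ℝ)⁻¹ * F (d i) else 0) - ∫ u in J i, F u
    with hEdef
  have hmain : (T : ℝ)⁻¹ * ∑ i ∈ (Finset.Icc 1 T).filter
        (fun i : ℕ => (i : ℝ) / T ∈ Set.Icc a b), f (((i : ℝ) / T - x) / h)
      - ∫ u in Set.Icc a b, F u = ∑ i ∈ Finset.Icc 1 T, E i := by
    rw [hsum, hdecomp, ← Finset.sum_sub_distrib]
  rw [hmain]
  -- predicates
  set Pint : ℕ → Prop := fun i => a ≤ c i ∧ d i ≤ b with hPintdef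
  set PA : ℕ → Prop := fun i => x - L₁ * h ≤ c i ∧ d i ≤ x + L₁ * h with hPAdef
  set PB : ℕ → Prop := fun i => d i < x - L₁ * h ∨ x + L₁ * h < c i with hPBdef
  set Qa : ℕ → Prop := fun i => a * T ≤ (i : ℝ) ∧ (i : ℝ) ≤ a * T + 1 with hQadef
  set Qb : ℕ → Prop := fun i => b * T ≤ (i : ℝ) ∧ (i : ℝ) ≤ b * T + 1 with hQbdef
  set Qc : ℕ → Prop := fun i => (x - L₁ * h) * T ≤ (i : ℝ) ∧ (i : ℝ) ≤ (x - L₁ * h) * T + 1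
    with hQcdef
  set Qd : ℕ → Prop := fun i => (x + L₁ * h) * T ≤ (i : ℝ) ∧ (i : ℝ) ≤ (x + L₁ * h) * T + 1
    with hQddef
  -- generic bound
  have bdGen : ∀ i : ℕ, |E i| ≤ 2 * Mf / T := by
    intro i
    rw [hEdef]
    have h1 : |(if (i : ℝ) / (T : ℝ) ∈ Set.Icc a b then (T : ℝ)⁻¹ * F (d i) else 0)|
        ≤ Mf * (1 / T) := by
      split_ifs
      · rw [abs_mul, abs_inv, abs_of_pos hTr]
        calc (T : ℝ)⁻¹ * |F (d i)| ≤ (T : ℝ)⁻¹ * Mf :=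
          mul_le_mul_of_nonneg_left (hFbd _) (by positivity)
        _ = Mf * (1 / T) := by ring
      · simpa using by positivity
    calc |(if (i : ℝ) / (T : ℝ) ∈ Set.Icc a b then (T : ℝ)⁻¹ * F (d i) else 0)
          - ∫ u in J i, F u|
        ≤ |(if (i : ℝ) / (T : ℝ) ∈ Set.Icc a b then (T : ℝ)⁻¹ * F (d i) else 0)|
          + |∫ u in J i, F u| := abs_sub _ _
      _ ≤ Mf * (1 / T) + Mf * (1 / T) := add_le_add h1 (hintJ i)
      _ = 2 * Mf / T := by ring
  -- case A bound
  have bdA : ∀ i : ℕ, Pint i → PA i → |E i| ≤ Lf / ((T : ℝ) * T * h) := by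
    intro i hPint hPA
    have hJi : J i = Set.Ioc (c i) (d i) := by
      rw [hJdef]
      refine Set.inter_eq_self_of_subset_right ?_
      intro u hu
      exact ⟨lt_of_le_of_lt hPint.1 hu.1, le_trans hu.2 hPint.2⟩
    have hcond : (i : ℝ) / (T : ℝ) ∈ Set.Icc a b :=
      ⟨le_trans hPint.1 (hcd i), hPint.2⟩
    rw [hEdef]
    simp only
    rw [if_pos hcond, hJi]
    have hTin : (T : ℝ)⁻¹ = d i - c i := by rw [hdiff i, one_div]
    rw [hTin]
    have hres := cellA (F := F) (c := c i) (d := d i) (CL := Lf * (1 / ((T : ℝ) * h)))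
      (hcd i) (hFint _ measure_Ioc_lt_top.ne) ?_
    · calc |(d i - c i) * F (d i) - ∫ u in Set.Ioc (c i) (d i), F u|
          ≤ Lf * (1 / ((T : ℝ) * h)) * (d i - c i) := hres
        _ = Lf / ((T : ℝ) * T * h) := by
            rw [hdiff i]; field_simp
    · intro u hu
      have hu1 : x - L₁ * h ≤ u := le_trans hPA.1 hu.1.le
      have hu2 : u ≤ x + L₁ * h := le_trans hu.2 hPA.2
      have hd1 : x - L₁ * h ≤ d i := le_trans hPA.1 (hcd i)
      have hd2 : d i ≤ x + L₁ * h := hPA.2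
      have hmem1 : (d i - x) / h ∈ Set.Icc (-L₁) L₁ := by
        constructor
        · rw [le_div_iff₀ hpos]; linarith
        · rw [div_le_iff₀ hpos]; linarith
      have hmem2 : (u - x) / h ∈ Set.Icc (-L₁) L₁ := by
        constructor
        · rw [le_div_iff₀ hpos]; linarith
        · rw [div_le_iff₀ hpos]; linarith
      have hlf := hlipf _ hmem1 _ hmem2
      have heq : (d i - x) / h - (u - x) / h = (d i - u) / h := by ring
      rw [heq, abs_div, abs_of_pos hpos] at hlf
      have hdu : |d i - u| ≤ 1 / T := by
        rw [abs_of_nonneg (by linarith [hu.2] : (0:ℝ) ≤ d i - u)]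
        have := hdiff i
        have := hu.1
        linarith
      calc |F (d i) - F u| ≤ Lf * (|d i - u| / h) := hlf
        _ ≤ Lf * (1 / ((T : ℝ) * h)) := by
            apply mul_le_mul_of_nonneg_left _ hLf
            rw [div_le_div_iff₀ hpos (by positivity)]
            calc |d i - u| * ((T : ℝ) * h) = (|d i - u| * T) * h := by ring
              _ ≤ 1 * h := by
                  apply mul_le_mul_of_nonneg_right _ hpos.le
                  have h2 : |d i - u| * T ≤ (1 / T) * T :=
                    mul_le_mul_of_nonneg_right hdu hTr.le
                  rw [one_div, inv_mul_cancel₀ hTr.ne'] at h2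
                  exact h2
  -- case B : zero
  have bdB : ∀ i : ℕ, Pint i → PB i → E i = 0 := by
    intro i hPint hPB
    have hJi : J i = Set.Ioc (c i) (d i) := by
      rw [hJdef]
      refine Set.inter_eq_self_of_subset_right ?_
      intro u hu
      exact ⟨lt_of_le_of_lt hPint.1 hu.1, le_trans hu.2 hPint.2⟩
    simp only [hPBdef] at hPB
    have hFz : ∀ u, c i ≤ u → u ≤ d i → F u = 0 := by
      intro u h1 h2
      rw [hFdef]
      apply hz
      rcases hPB with hc1 | hc1
      · have hlt : (u - x) / h < -L₁ := by rw [div_lt_iff₀ hpos]; nlinarith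
        calc L₁ < -((u - x) / h) := by linarith
          _ ≤ |(u - x) / h| := neg_le_abs _
      · have hlt : L₁ < (u - x) / h := by rw [lt_div_iff₀ hpos]; nlinarith
        exact lt_of_lt_of_le hlt (le_abs_self _)
    have h1 : F (d i) = 0 := hFz _ (hcd i) le_rfl
    have h2 : (∫ u in J i, F u) = 0 := by
      rw [hJi]
      apply setIntegral_eq_zero_of_forall_eq_zero
      intro u hu
      exact hFz u hu.1.le hu.2
    rw [hEdef]
    simp only [h1, h2, mul_zero, ite_self, sub_zero]
  -- boundary : zero unless Qa/Qb
  have hdi : ∀ i : ℕ, d i = (i : ℝ) / T := fun _ => rfl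
  have hci : ∀ i : ℕ, c i = ((i : ℝ) - 1) / T := fun _ => rfl
  have bdnot : ∀ i : ℕ, ¬ Pint i → ¬ Qa i → ¬ Qb i → E i = 0 := by
    intro i hn hqa hqb
    simp only [hPintdef] at hn
    rw [not_and_or, not_le, not_le] at hn
    simp only [hQadef] at hqa
    simp only [hQbdef] at hqb
    push_neg at hqa hqb
    have hif : ¬ ((i : ℝ) / (T : ℝ) ∈ Set.Icc a b) := by
      intro hmem
      rcases hn with hca | hbd
      · have h1 : a * T ≤ (i : ℝ) := by
          have := hmem.1
          rw [le_div_iff₀ hTr] at this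
          linarith
        have h2 : (i : ℝ) ≤ a * T + 1 := by
          rw [hci i, div_lt_iff₀ hTr] at hca
          linarith
        exact absurd h2 (not_le.2 (hqa h1))
      · rw [hdi i] at hbd
        exact absurd hmem.2 (not_le.2 hbd)
    have hJe : J i = (∅ : Set ℝ) := by
      rw [hJdef]
      simp only
      rw [Set.eq_empty_iff_forall_notMem]
      rintro u ⟨hu1, hu2⟩
      rcases hn with hca | hbd
      · have h1 : a * T ≤ (i : ℝ) := by
          have : a < d i := lt_of_lt_of_le hu1.1 hu2.2
          rw [hdi i, lt_div_iff₀ hTr] at this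
          linarith
        have h2 : (i : ℝ) ≤ a * T + 1 := by
          rw [hci i, div_lt_iff₀ hTr] at hca
          linarith
        exact absurd h2 (not_le.2 (hqa h1))
      · have h1 : b * T ≤ (i : ℝ) := by
          rw [hdi i, lt_div_iff₀ hTr] at hbd
          linarith
        have h2 : (i : ℝ) ≤ b * T + 1 := by
          have : c i < b := lt_of_lt_of_le hu2.1 hu1.2
          rw [hci i, div_lt_iff₀ hTr] at this
          linarith
        exact absurd h2 (not_le.2 (hqb h1))
    rw [hEdef]
    simp only [hif, if_false, hJe]
    simp
  -- case C classification
  have classC : ∀ i : ℕ, ¬ PA i → ¬ PB i → Qc i ∨ Qd i := by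
    intro i hna hnb
    simp only [hPAdef] at hna
    simp only [hPBdef] at hnb
    push_neg at hna hnb
    rcases le_or_gt (x - L₁ * h) (c i) with hc1 | hc1
    · right
      have h1 := hna hc1
      have h2 := hnb.2
      simp only [hQddef]
      constructor
      · rw [hdi i, lt_div_iff₀ hTr] at h1
        linarith
      · rw [hci i, div_le_iff₀ hTr] at h2
        linarith
    · left
      have h1 := hnb.1
      simp only [hQcdef]
      constructor
      · rw [hdi i, le_div_iff₀ hTr] at h1
        linarith
      · rw [hci i, div_lt_iff₀ hTr] at hc1
        linarith
  -- counting bounds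
  have cardQ : ∀ (t : Finset ℕ) (y : ℝ),
      (∀ i ∈ t, y * T ≤ (i : ℝ) ∧ (i : ℝ) ≤ y * T + 1) →
      ((t.card : ℝ)) ≤ 2 := by
    intro t y hP
    have := count_aux (s := t) (α := y * T) (β := y * T + 1)
      (by norm_num) hP
    linarith
  -- assembly
  calc |∑ i ∈ Finset.Icc 1 T, E i| ≤ ∑ i ∈ Finset.Icc 1 T, |E i| :=
      Finset.abs_sum_le_sum_abs _ _
    _ ≤ (2 * L₁ * Lf + 16 * Mf) / T := by
      rw [← Finset.sum_filter_add_sum_filter_not (Finset.Icc 1 T) Pint (fun i => |E i|)]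
      have hP2 : ∑ i ∈ (Finset.Icc 1 T).filter (fun i => ¬ Pint i), |E i| ≤ 8 * Mf / T := by
        rw [← Finset.sum_filter_add_sum_filter_not
          ((Finset.Icc 1 T).filter (fun i => ¬ Pint i)) (fun i => Qa i ∨ Qb i) (fun i => |E i|)]
        have hz2 : ∑ i ∈ ((Finset.Icc 1 T).filter (fun i => ¬ Pint i)).filter
            (fun i => ¬(Qa i ∨ Qb i)), |E i| = 0 := by
          apply Finset.sum_eq_zero
          intro i hi
          rw [Finset.mem_filter] at hi
          obtain ⟨hit, hq⟩ := hi
          rw [Finset.mem_filter] at hit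
          push_neg at hq
          rw [abs_eq_zero]
          exact bdnot i hit.2 hq.1 hq.2
        have hb2 : ∑ i ∈ ((Finset.Icc 1 T).filter (fun i => ¬ Pint i)).filter
            (fun i => Qa i ∨ Qb i), |E i|
            ≤ ((((Finset.Icc 1 T).filter (fun i => ¬ Pint i)).filter
              (fun i => Qa i ∨ Qb i)).card : ℝ) * (2 * Mf / T) := by
          have := Finset.sum_le_card_nsmul (((Finset.Icc 1 T).filter (fun i => ¬ Pint i)).filter
            (fun i => Qa i ∨ Qb i)) (fun i => |E i|) (2 * Mf / T) (fun i _ => bdGen i)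
          rwa [nsmul_eq_mul] at this
        have hcard : ((((Finset.Icc 1 T).filter (fun i => ¬ Pint i)).filter
            (fun i => Qa i ∨ Qb i)).card : ℝ) ≤ 4 := by
          have hsub : (((Finset.Icc 1 T).filter (fun i => ¬ Pint i)).filter
              (fun i => Qa i ∨ Qb i)) ⊆
              (Finset.Icc 1 T).filter Qa ∪ (Finset.Icc 1 T).filter Qb := by
            intro i hi
            rw [Finset.mem_filter] at hi
            have hmem : i ∈ Finset.Icc 1 T := Finset.filter_subset _ _ hi.1
            rcases hi.2 with h1 | h1
            · exact Finset.mem_union_left _ (Finset.mem_filter.2 ⟨hmem, h1⟩)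
            · exact Finset.mem_union_right _ (Finset.mem_filter.2 ⟨hmem, h1⟩)
          have h5 : ((((Finset.Icc 1 T).filter (fun i => ¬ Pint i)).filter
              (fun i => Qa i ∨ Qb i)).card : ℕ)
              ≤ ((Finset.Icc 1 T).filter Qa).card + ((Finset.Icc 1 T).filter Qb).card :=
            le_trans (Finset.card_le_card hsub) (Finset.card_union_le _ _)
          have h6 := cardQ ((Finset.Icc 1 T).filter Qa) a
            (fun i hi => by
              have := (Finset.mem_filter.1 hi).2
              simpa [hQadef] using this)
          have h7 := cardQ ((Finset.Icc 1 T).filter Qb) b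
            (fun i hi => by
              have := (Finset.mem_filter.1 hi).2
              simpa [hQbdef] using this)
          have h10 : ((((Finset.Icc 1 T).filter (fun i => ¬ Pint i)).filter
              (fun i => Qa i ∨ Qb i)).card : ℝ)
              ≤ (((Finset.Icc 1 T).filter Qa).card : ℝ)
              + (((Finset.Icc 1 T).filter Qb).card : ℝ) := by
            exact_mod_cast h5
          linarith
        have hfin : ((((Finset.Icc 1 T).filter (fun i => ¬ Pint i)).filter
            (fun i => Qa i ∨ Qb i)).card : ℝ) * (2 * Mf / T) ≤ 4 * (2 * Mf / T) :=
          mul_le_mul_of_nonneg_right hcard (by positivity)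
        have : (4 : ℝ) * (2 * Mf / T) = 8 * Mf / T := by ring
        linarith
      have hP1 : ∑ i ∈ (Finset.Icc 1 T).filter Pint, |E i|
          ≤ 2 * L₁ * Lf / T + 8 * Mf / T := by
        rw [← Finset.sum_filter_add_sum_filter_not
          ((Finset.Icc 1 T).filter Pint) PA (fun i => |E i|)]
        have hA : ∑ i ∈ ((Finset.Icc 1 T).filter Pint).filter PA, |E i|
            ≤ 2 * L₁ * Lf / T := by
          have hbound : ∀ i ∈ ((Finset.Icc 1 T).filter Pint).filter PA,
              |E i| ≤ Lf / ((T : ℝ) * T * h) := by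
            intro i hi
            rw [Finset.mem_filter] at hi
            exact bdA i (Finset.mem_filter.1 hi.1).2 hi.2
          have h1 := Finset.sum_le_card_nsmul _ _ _ hbound
          rw [nsmul_eq_mul] at h1
          have hcardA : ((((Finset.Icc 1 T).filter Pint).filter PA).card : ℝ)
              ≤ 2 * L₁ * h * T := by
            have h2 := count_aux (s := ((Finset.Icc 1 T).filter Pint).filter PA)
              (α := (x - L₁ * h) * T + 1) (β := (x + L₁ * h) * T)
              (by nlinarith [mul_pos (mul_pos hL hpos) hTr]) ?_
            · have he : (x + L₁ * h) * T - ((x - L₁ * h) * T + 1) + 1 = 2 * L₁ * h * T := by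
                ring
              linarith
            · intro i hi
              rw [Finset.mem_filter] at hi
              have hPAi := hi.2
              simp only [hPAdef] at hPAi
              constructor
              · have := hPAi.1
                rw [hci i, le_div_iff₀ hTr] at this
                linarith
              · have := hPAi.2
                rw [hdi i, div_le_iff₀ hTr] at this
                linarith
          calc ∑ i ∈ ((Finset.Icc 1 T).filter Pint).filter PA, |E i|
              ≤ ((((Finset.Icc 1 T).filter Pint).filter PA).card : ℝ)
                * (Lf / ((T : ℝ) * T * h)) := h1
            _ ≤ (2 * L₁ * h * T) * (Lf / ((T : ℝ) * T * h)) :=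
                mul_le_mul_of_nonneg_right hcardA (by positivity)
            _ = 2 * L₁ * Lf / T := by field_simp
        have hnA : ∑ i ∈ ((Finset.Icc 1 T).filter Pint).filter (fun i => ¬ PA i), |E i|
            ≤ 8 * Mf / T := by
          rw [← Finset.sum_filter_add_sum_filter_not
            (((Finset.Icc 1 T).filter Pint).filter (fun i => ¬ PA i)) PB (fun i => |E i|)]
          have hz3 : ∑ i ∈ ((((Finset.Icc 1 T).filter Pint).filter
              (fun i => ¬ PA i)).filter PB), |E i| = 0 := by
            apply Finset.sum_eq_zero
            intro i hi
            rw [Finset.mem_filter] at hi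
            rw [abs_eq_zero]
            exact bdB i (Finset.mem_filter.1 (Finset.mem_filter.1 hi.1).1).2 hi.2
          have hb3 : ∑ i ∈ ((((Finset.Icc 1 T).filter Pint).filter
              (fun i => ¬ PA i)).filter (fun i => ¬ PB i)), |E i|
              ≤ (((((Finset.Icc 1 T).filter Pint).filter
                (fun i => ¬ PA i)).filter (fun i => ¬ PB i)).card : ℝ) * (2 * Mf / T) := by
            have := Finset.sum_le_card_nsmul ((((Finset.Icc 1 T).filter Pint).filter
              (fun i => ¬ PA i)).filter (fun i => ¬ PB i)) (fun i => |E i|) (2 * Mf / T)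
              (fun i _ => bdGen i)
            rwa [nsmul_eq_mul] at this
          have hcard3 : (((((Finset.Icc 1 T).filter Pint).filter
              (fun i => ¬ PA i)).filter (fun i => ¬ PB i)).card : ℝ) ≤ 4 := by
            have hsub : ((((Finset.Icc 1 T).filter Pint).filter
                (fun i => ¬ PA i)).filter (fun i => ¬ PB i)) ⊆
                (Finset.Icc 1 T).filter Qc ∪ (Finset.Icc 1 T).filter Qd := by
              intro i hi
              rw [Finset.mem_filter] at hi
              have hi1 := Finset.mem_filter.1 hi.1
              have hmem : i ∈ Finset.Icc 1 T :=
                Finset.filter_subset _ _ (Finset.filter_subset _ _ hi.1)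
              rcases classC i hi1.2 hi.2 with h1 | h1
              · exact Finset.mem_union_left _ (Finset.mem_filter.2 ⟨hmem, h1⟩)
              · exact Finset.mem_union_right _ (Finset.mem_filter.2 ⟨hmem, h1⟩)
            have h5 : (((((Finset.Icc 1 T).filter Pint).filter
                (fun i => ¬ PA i)).filter (fun i => ¬ PB i)).card : ℕ)
                ≤ ((Finset.Icc 1 T).filter Qc).card + ((Finset.Icc 1 T).filter Qd).card :=
              le_trans (Finset.card_le_card hsub) (Finset.card_union_le _ _)
            have h6 := cardQ ((Finset.Icc 1 T).filter Qc) (x - L₁ * h)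
              (fun i hi => by
                have := (Finset.mem_filter.1 hi).2
                simpa [hQcdef] using this)
            have h7 := cardQ ((Finset.Icc 1 T).filter Qd) (x + L₁ * h)
              (fun i hi => by
                have := (Finset.mem_filter.1 hi).2
                simpa [hQddef] using this)
            have h10 : (((((Finset.Icc 1 T).filter Pint).filter
                (fun i => ¬ PA i)).filter (fun i => ¬ PB i)).card : ℝ)
                ≤ (((Finset.Icc 1 T).filter Qc).card : ℝ)
                + (((Finset.Icc 1 T).filter Qd).card : ℝ) := by
              exact_mod_cast h5
            linarith
          have hfin3 : (((((Finset.Icc 1 T).filter Pint).filter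
              (fun i => ¬ PA i)).filter (fun i => ¬ PB i)).card : ℝ) * (2 * Mf / T)
              ≤ 4 * (2 * Mf / T) := mul_le_mul_of_nonneg_right hcard3 (by positivity)
          have heq4 : (4 : ℝ) * (2 * Mf / T) = 8 * Mf / T := by ring
          linarith
        linarith
      have hfinal : 2 * L₁ * Lf / T + 8 * Mf / T + 8 * Mf / T
          = (2 * L₁ * Lf + 16 * Mf) / T := by ring
      linarith

lemma sum_cast_conv (T : ℕ) (p : ℝ → Prop) [DecidablePred p] (f : ℝ → ℝ) :
    ∑ i ∈ (Finset.filter (fun i => p i) (do let a ← Finset.Icc 1 T; pure ((a:ℕ):ℝ))), f i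
    = ∑ i ∈ (Finset.Icc 1 T).filter (fun i : ℕ => p ((i : ℝ))), f ((i:ℕ) : ℝ) := by
  have h1 : (do let a ← Finset.Icc 1 T; pure ((a:ℕ):ℝ))
      = (Finset.Icc 1 T).image (fun i : ℕ => (i : ℝ)) := by
    ext r; simp [Finset.mem_image]
  rw [h1, Finset.filter_image, Finset.sum_image (fun x _ y _ hxy => Nat.cast_injective hxy)]

/-- Uniform approximation of integrals by Riemann sums over the fixed design
`i/T`, for Lipschitz transformations `f = g ∘ K` of a compactly supported
Lipschitz kernel `K` (Assumption A.2′), with polynomial factor of order `j`: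
both the signed and the absolute-value versions hold with error `C/T`,
uniformly in `x ∈ [0,1]`. -/
theorem riemann_sum_kernel_approx
    (K : ℝ → ℝ) (Kbar μb Λ₁ L₁ : ℝ) (h : ℕ → ℝ)
    (hKbd : ∀ u, |K u| ≤ Kbar)
    (hKint : (∫ u, |K u|) ≤ μb)
    (hΛpos : 0 < Λ₁) (hLpos : 0 < L₁)
    (hsupp : ∀ u, L₁ < |u| → K u = 0)
    (hlip : ∀ u ∈ Set.Icc (-L₁) L₁, ∀ u' ∈ Set.Icc (-L₁) L₁,
      |K u - K u'| ≤ Λ₁ * |u - u'|)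
    (g : ℝ → ℝ) (Lg : NNReal)
    (hg : LipschitzOnWith Lg g (Set.range K)) (hg0 : g 0 = 0)
    (hpos : ∀ T, 0 < h T)
    (h0 : Tendsto h atTop (nhds 0))
    (hTh : Tendsto (fun T : ℕ => (T : ℝ) * h T) atTop atTop)
    (j : ℕ) (a b : ℝ) (ha : 0 ≤ a) (hab : a ≤ b) (hb1 : b ≤ 1) :
    ∃ C : ℝ, ∃ T₀ : ℕ, ∀ T ≥ T₀, ∀ x ∈ Set.Icc (0 : ℝ) 1,
      |(T : ℝ)⁻¹ * ∑ i ∈ (Finset.Icc 1 T).filter (fun i => (i : ℝ) / T ∈ Set.Icc a b),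
          g (K (((i : ℝ) / T - x) / h T)) * (((i : ℝ) / T - x) / h T) ^ j -
        ∫ u in Set.Icc a b, g (K ((u - x) / h T)) * ((u - x) / h T) ^ j| ≤ C / T ∧
      |(T : ℝ)⁻¹ * ∑ i ∈ (Finset.Icc 1 T).filter (fun i => (i : ℝ) / T ∈ Set.Icc a b),
          g (K (((i : ℝ) / T - x) / h T)) * |((i : ℝ) / T - x) / h T| ^ j -
        ∫ u in Set.Icc a b, g (K ((u - x) / h T)) * |(u - x) / h T| ^ j| ≤ C / T := by
  have hKb0 : 0 ≤ Kbar := le_trans (abs_nonneg _) (hKbd 0)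
  have h0mem : (0 : ℝ) ∈ Set.range K :=
    ⟨L₁ + 1, hsupp _ (by rw [abs_of_pos (by linarith)]; linarith)⟩
  have hgb : ∀ t : ℝ, |g (K t)| ≤ (Lg : ℝ) * Kbar := by
    intro t
    have hd := hg.dist_le_mul (K t) (Set.mem_range_self t) 0 h0mem
    rw [hg0, Real.dist_eq, Real.dist_eq, sub_zero, sub_zero] at hd
    calc |g (K t)| ≤ (Lg : ℝ) * |K t| := hd
      _ ≤ (Lg : ℝ) * Kbar := mul_le_mul_of_nonneg_left (hKbd t) Lg.coe_nonneg
  have hgbnn : 0 ≤ (Lg : ℝ) * Kbar := le_trans (abs_nonneg _) (hgb 0)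
  have hgl : ∀ t ∈ Set.Icc (-L₁) L₁, ∀ s ∈ Set.Icc (-L₁) L₁,
      |g (K t) - g (K s)| ≤ (Lg : ℝ) * Λ₁ * |t - s| := by
    intro t ht s hs
    have hd := hg.dist_le_mul (K t) (Set.mem_range_self t) (K s) (Set.mem_range_self s)
    rw [Real.dist_eq, Real.dist_eq] at hd
    calc |g (K t) - g (K s)| ≤ (Lg : ℝ) * |K t - K s| := hd
      _ ≤ (Lg : ℝ) * (Λ₁ * |t - s|) :=
          mul_le_mul_of_nonneg_left (hlip t ht s hs) Lg.coe_nonneg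
      _ = (Lg : ℝ) * Λ₁ * |t - s| := by ring
  have habs : ∀ t : ℝ, L₁ < |t| → g (K t) = 0 := fun t ht => by rw [hsupp t ht, hg0]
  -- measurability of g ∘ K
  have hKlip : LipschitzOnWith (Real.toNNReal Λ₁) K (Set.Icc (-L₁) L₁) := by
    apply LipschitzOnWith.of_dist_le_mul
    intro u hu v hv
    rw [Real.dist_eq, Real.dist_eq, Real.coe_toNNReal _ hΛpos.le]
    exact hlip u hu v hv
  have hproj : Continuous (fun u : ℝ => max (-L₁) (min u L₁)) :=
    continuous_const.max (continuous_id.min continuous_const)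
  have hprojmem : ∀ u : ℝ, max (-L₁) (min u L₁) ∈ Set.Icc (-L₁) L₁ := by
    intro u
    exact ⟨le_max_left _ _, max_le (by linarith) (min_le_right _ _)⟩
  have hKc : Continuous (fun u : ℝ => K (max (-L₁) (min u L₁))) :=
    hKlip.continuousOn.comp_continuous hproj hprojmem
  have hgKc : Continuous (fun u : ℝ => g (K (max (-L₁) (min u L₁)))) :=
    hg.continuousOn.comp_continuous hKc (fun u => Set.mem_range_self _)
  have hnotmem : ∀ t : ℝ, t ∉ Set.Icc (-L₁) L₁ → L₁ < |t| := by
    intro t ht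
    rw [Set.mem_Icc, not_and_or, not_le, not_le] at ht
    rcases ht with h1 | h1
    · calc L₁ < -t := by linarith
        _ ≤ |t| := neg_le_abs t
    · exact lt_of_lt_of_le h1 (le_abs_self t)
  have hmeasgK : Measurable (fun t : ℝ => g (K t)) := by
    have heq : (fun t : ℝ => g (K t)) =
        Set.indicator (Set.Icc (-L₁) L₁) (fun t => g (K (max (-L₁) (min t L₁)))) := by
      funext t
      by_cases ht : t ∈ Set.Icc (-L₁) L₁
      · rw [Set.indicator_of_mem ht, min_eq_left ht.2, max_eq_right ht.1]
      · rw [Set.indicator_of_notMem ht]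
        exact habs t (hnotmem t ht)
    rw [heq]
    exact hgKc.measurable.indicator measurableSet_Icc
  -- constants
  set Mf : ℝ := (Lg : ℝ) * Kbar * L₁ ^ j with hMfdef
  set Lf : ℝ := (Lg : ℝ) * Λ₁ * L₁ ^ j + (Lg : ℝ) * Kbar * ((j : ℝ) * L₁ ^ (j - 1))
    with hLfdef
  have hMf0 : 0 ≤ Mf := mul_nonneg hgbnn (pow_nonneg hLpos.le j)
  have hLf0 : 0 ≤ Lf := add_nonneg
    (mul_nonneg (mul_nonneg Lg.coe_nonneg hΛpos.le) (pow_nonneg hLpos.le _))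
    (mul_nonneg hgbnn (mul_nonneg (Nat.cast_nonneg j) (pow_nonneg hLpos.le _)))
  -- hypotheses for f₁ = g∘K * t^j
  have hbd1 : ∀ t : ℝ, |g (K t) * t ^ j| ≤ Mf := by
    intro t
    rcases le_or_gt |t| L₁ with ht | ht
    · rw [abs_mul, abs_pow]
      exact mul_le_mul (hgb t) (pow_le_pow_left₀ (abs_nonneg t) ht j) (by positivity) hgbnn
    · rw [habs t ht, zero_mul, abs_zero]; exact hMf0
  have hz1 : ∀ t : ℝ, L₁ < |t| → g (K t) * t ^ j = 0 := fun t ht => by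
    rw [habs t ht, zero_mul]
  have hlip1 : ∀ t ∈ Set.Icc (-L₁) L₁, ∀ s ∈ Set.Icc (-L₁) L₁,
      |g (K t) * t ^ j - g (K s) * s ^ j| ≤ Lf * |t - s| := by
    intro t ht s hs
    have habst : |t| ≤ L₁ := abs_le.2 ⟨ht.1, ht.2⟩
    have habss : |s| ≤ L₁ := abs_le.2 ⟨hs.1, hs.2⟩
    have hsplit : g (K t) * t ^ j - g (K s) * s ^ j
        = (g (K t) - g (K s)) * t ^ j + g (K s) * (t ^ j - s ^ j) := by ring
    rw [hsplit]
    calc |(g (K t) - g (K s)) * t ^ j + g (K s) * (t ^ j - s ^ j)|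
        ≤ |(g (K t) - g (K s)) * t ^ j| + |g (K s) * (t ^ j - s ^ j)| := abs_add_le _ _
      _ = |g (K t) - g (K s)| * |t ^ j| + |g (K s)| * |t ^ j - s ^ j| := by
          rw [abs_mul, abs_mul]
      _ ≤ ((Lg : ℝ) * Λ₁ * |t - s|) * L₁ ^ j
          + ((Lg : ℝ) * Kbar) * ((j : ℝ) * L₁ ^ (j - 1) * |t - s|) := by
          apply add_le_add
          · apply mul_le_mul (hgl t ht s hs) ?_ (abs_nonneg _)
              (mul_nonneg (mul_nonneg Lg.coe_nonneg hΛpos.le) (abs_nonneg _))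
            rw [abs_pow]
            exact pow_le_pow_left₀ (abs_nonneg t) habst j
          · exact mul_le_mul (hgb s) (pow_diff_aux j habst habss) (abs_nonneg _) hgbnn
      _ = Lf * |t - s| := by rw [hLfdef]; ring
  -- hypotheses for f₂ = g∘K * |t|^j
  have hbd2 : ∀ t : ℝ, |g (K t) * |t| ^ j| ≤ Mf := by
    intro t
    rcases le_or_gt |t| L₁ with ht | ht
    · rw [abs_mul, abs_pow, abs_abs]
      exact mul_le_mul (hgb t) (pow_le_pow_left₀ (abs_nonneg t) ht j) (by positivity) hgbnn
    · rw [habs t ht, zero_mul, abs_zero]; exact hMf0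
  have hz2 : ∀ t : ℝ, L₁ < |t| → g (K t) * |t| ^ j = 0 := fun t ht => by
    rw [habs t ht, zero_mul]
  have hlip2 : ∀ t ∈ Set.Icc (-L₁) L₁, ∀ s ∈ Set.Icc (-L₁) L₁,
      |g (K t) * |t| ^ j - g (K s) * |s| ^ j| ≤ Lf * |t - s| := by
    intro t ht s hs
    have habst : |t| ≤ L₁ := abs_le.2 ⟨ht.1, ht.2⟩
    have habss : |s| ≤ L₁ := abs_le.2 ⟨hs.1, hs.2⟩
    have hp : abs (|t| ^ j - |s| ^ j) ≤ (j : ℝ) * L₁ ^ (j - 1) * abs (|t| - |s|) :=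
      pow_diff_aux j (t := |t|) (s := |s|) (by rwa [abs_abs]) (by rwa [abs_abs])
    have hp2 : abs (|t| ^ j - |s| ^ j) ≤ (j : ℝ) * L₁ ^ (j - 1) * |t - s| :=
      le_trans hp (mul_le_mul_of_nonneg_left (abs_abs_sub_abs_le_abs_sub t s)
        (mul_nonneg (Nat.cast_nonneg j) (pow_nonneg hLpos.le _)))
    have hsplit : g (K t) * |t| ^ j - g (K s) * |s| ^ j
        = (g (K t) - g (K s)) * |t| ^ j + g (K s) * (|t| ^ j - |s| ^ j) := by ring
    rw [hsplit]
    calc |(g (K t) - g (K s)) * |t| ^ j + g (K s) * (|t| ^ j - |s| ^ j)|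
        ≤ |(g (K t) - g (K s)) * |t| ^ j| + |g (K s) * (|t| ^ j - |s| ^ j)| := abs_add_le _ _
      _ = |g (K t) - g (K s)| * abs (|t| ^ j) + |g (K s)| * abs (|t| ^ j - |s| ^ j) := by
          rw [abs_mul, abs_mul]
      _ ≤ ((Lg : ℝ) * Λ₁ * |t - s|) * L₁ ^ j
          + ((Lg : ℝ) * Kbar) * ((j : ℝ) * L₁ ^ (j - 1) * |t - s|) := by
          apply add_le_add
          · apply mul_le_mul (hgl t ht s hs) ?_ (abs_nonneg _)
              (mul_nonneg (mul_nonneg Lg.coe_nonneg hΛpos.le) (abs_nonneg _))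
            rw [abs_pow, abs_abs]
            exact pow_le_pow_left₀ (abs_nonneg t) habst j
          · exact mul_le_mul (hgb s) hp2 (abs_nonneg _) hgbnn
      _ = Lf * |t - s| := by rw [hLfdef]; ring
  refine ⟨2 * L₁ * Lf + 16 * Mf, 1, fun T hT x hx => ?_⟩
  have key1 := key_lemma (fun t => g (K t) * t ^ j)
    (hmeasgK.mul (measurable_id.pow_const j)) L₁ Mf Lf hLpos hMf0 hLf0 hbd1 hz1 hlip1
    (h T) (hpos T) a b x ha hab hb1 T hT
  have key2 := key_lemma (fun t => g (K t) * |t| ^ j)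
    (hmeasgK.mul (measurable_id.abs.pow_const j)) L₁ Mf Lf hLpos hMf0 hLf0 hbd2 hz2 hlip2
    (h T) (hpos T) a b x ha hab hb1 T hT
  constructor
  · rw [sum_cast_conv T (fun r => r / (T : ℝ) ∈ Set.Icc a b)
      (fun r => g (K ((r / (T : ℝ) - x) / h T)) * ((r / (T : ℝ) - x) / h T) ^ j)]
    exact key1
  · rw [sum_cast_conv T (fun r => r / (T : ℝ) ∈ Set.Icc a b)
      (fun r => g (K ((r / (T : ℝ) - x) / h T)) * |(r / (T : ℝ) - x) / h T| ^ j)]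
    exact key2
end

section
/- Let K ≥ 0 satisfy Assumption A.2 with support normalized to L₁ = 1, and suppose the Lebesgue measure of {u ∈ G_x : K(u) > 0} is positive for every x ∈ [0,1]. Let S_{T,x} be the 2×2 matrix with entries s_{T,p+q}(x) = (Th)^{-1} Σ_{t=1}^T ((t/T − x)/h)^{p+q} K((t/T − x)/h), p,q ∈ {0,1}. Then there exist λ₀ > 0 and T₀ < ∞ such that min_{x∈[0,1]} λ_min(S_{T,x}) ≥ λ₀ for all T ≥ T₀, where λ_min denotes the smallest eigenvalue. -/
open Filter Set MeasureTheory

/-- The limiting integration domain at `x`. -/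
noncomputable def Gdom (x : ℝ) : Set ℝ :=
  if x = 0 then Set.Icc 0 1 else if x = 1 then Set.Icc (-1) 0 else Set.Icc (-1) 1

/-- The 2×2 local linear design matrix `S_{T,x}` with entries
`s_{T,p+q}(x) = (Th)⁻¹ Σ_t ((t/T−x)/h)^{p+q} K((t/T−x)/h)`. -/
noncomputable def Sdesign (K : ℝ → ℝ) (h : ℝ) (T : ℕ) (x : ℝ) :
    Matrix (Fin 2) (Fin 2) ℝ :=
  Matrix.of fun p q => ((T : ℝ) * h)⁻¹ * ∑ t ∈ Finset.Icc 1 T,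
    (((t : ℝ) / T - x) / h) ^ ((p : ℕ) + (q : ℕ)) * K (((t : ℝ) / T - x) / h)

section Aux

open Matrix

lemma exists_level (K : ℝ → ℝ) (G : Set ℝ) (hpos : 0 < volume {u ∈ G | 0 < K u}) :
    ∃ ε : ℝ, 0 < ε ∧ 0 < volume {u ∈ G | ε ≤ K u} := by
  by_contra hc
  push_neg at hc
  have hsub : {u ∈ G | 0 < K u} ⊆ ⋃ n : ℕ, {u ∈ G | 1/((n:ℝ)+1) ≤ K u} := by
    rintro u ⟨huG, huK⟩
    obtain ⟨n, hn⟩ := exists_nat_one_div_lt huK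
    exact mem_iUnion.mpr ⟨n, huG, hn.le⟩
  have hz : volume {u ∈ G | 0 < K u} = 0 :=
    measure_mono_null hsub (measure_iUnion_null fun n =>
      le_zero_iff.mp (hc (1/((n:ℝ)+1)) (by positivity)))
  exact hpos.ne' hz


lemma quad_form (K : ℝ → ℝ) (h : ℝ) (T : ℕ) (x : ℝ) (v : Fin 2 → ℝ) :
    v ⬝ᵥ (Sdesign K h T x).mulVec v
      = ((T:ℝ)*h)⁻¹ * ∑ t ∈ Finset.Icc 1 T,
          (v 0 + v 1 * (((t:ℝ)/T - x)/h))^2 * K (((t:ℝ)/T - x)/h) := by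
  have key : ∑ t ∈ Finset.Icc 1 T,
      (v 0 + v 1 * (((t:ℝ)/T - x)/h))^2 * K (((t:ℝ)/T - x)/h)
      = v 0^2 * (∑ t ∈ Finset.Icc 1 T, K (((t:ℝ)/T - x)/h))
        + (2*(v 0*v 1)) * (∑ t ∈ Finset.Icc 1 T, (((t:ℝ)/T - x)/h) * K (((t:ℝ)/T - x)/h))
        + v 1^2 * (∑ t ∈ Finset.Icc 1 T, (((t:ℝ)/T - x)/h)^2 * K (((t:ℝ)/T - x)/h)) := by
    rw [Finset.mul_sum, Finset.mul_sum, Finset.mul_sum, ← Finset.sum_add_distrib,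
      ← Finset.sum_add_distrib]
    exact Finset.sum_congr rfl fun t _ => by ring
  simp only [dotProduct, Matrix.mulVec, Sdesign, Matrix.of_apply, Fin.sum_univ_two,
    Fin.isValue, Fin.val_zero, Fin.val_one, pow_zero, pow_one, one_mul, Nat.add_zero, Nat.zero_add]
  rw [key]
  ring

set_option maxHeartbeats 1600000 in
lemma core_bound (K : ℝ → ℝ) (Λ₁ ε δ : ℝ) (hΛ : 1 ≤ Λ₁) (hε : 0 < ε) (hδpos : 0 < δ)
    (hKnn : ∀ u, 0 ≤ K u) (hlip : ∀ u u' : ℝ, |K u - K u'| ≤ Λ₁ * |u - u'|)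
    (T : ℕ) (h x a b z : ℝ) (hh : 0 < h)
    (hzcase : (z = 0 ∧ x ≤ 1/2) ∨ (z = -1 ∧ 1/2 ≤ x ∧ x ≤ 1))
    (hx0 : 0 ≤ x)
    (hab : a^2 + b^2 = 1)
    (hF : ENNReal.ofReal δ ≤ volume {u ∈ Set.Icc z (z+1) | ε ≤ K u})
    (hh4 : h ≤ 1/4)
    (hTh1 : 2*Λ₁/ε ≤ (T:ℝ)*h) (hTh2 : 32/δ ≤ (T:ℝ)*h) :
    δ/2 * ((δ/32)^2 * (ε/2)) ≤ ((T:ℝ)*h)⁻¹ * ∑ t ∈ Finset.Icc 1 T,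
      (a + b * (((t:ℝ)/T - x)/h))^2 * K (((t:ℝ)/T - x)/h) := by
  have hTh0 : 0 < (T:ℝ)*h := lt_of_lt_of_le (by positivity) hTh2
  have hT0 : 0 < (T:ℝ) := by
    rcases Nat.eq_zero_or_pos T with h'|h'
    · rw [h'] at hTh0; norm_num at hTh0
    · exact_mod_cast h'
  set Δ : ℝ := ((T:ℝ)*h)⁻¹ with hΔdef
  have hΔpos : 0 < Δ := by positivity
  have hΔε : Δ ≤ ε/(2*Λ₁) := by
    have h1 : ((T:ℝ)*h)⁻¹ ≤ (2*Λ₁/ε)⁻¹ := inv_anti₀ (by positivity) hTh1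
    rwa [inv_div] at h1
  have hΔδ : Δ ≤ δ/32 := by
    have h1 : ((T:ℝ)*h)⁻¹ ≤ (32/δ)⁻¹ := inv_anti₀ (by positivity) hTh2
    rwa [inv_div] at h1
  have hΛΔ : Λ₁ * Δ ≤ ε/2 := by
    calc Λ₁ * Δ ≤ Λ₁ * (ε/(2*Λ₁)) := by gcongr
    _ = ε/2 := by field_simp
  have hb1 : |b| ≤ 1 := by nlinarith [sq_abs b, sq_nonneg (|b| - 1), sq_nonneg a]
  set η : ℝ := δ/32 with hηdef
  have hηpos : 0 < η := by positivity
  set w : ℕ → ℝ := fun t => (((t:ℝ))/T - x)/h with hwdef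
  set F : Set ℝ := {u ∈ Set.Icc z (z+1) | ε ≤ K u} with hFdef
  have hδ1 : δ ≤ 1 := by
    have h1 : volume F ≤ ENNReal.ofReal 1 := by
      rw [← show z + 1 - z = 1 by ring, ← Real.volume_Icc]
      exact measure_mono (sep_subset _ _)
    exact (ENNReal.ofReal_le_ofReal_iff (by norm_num)).mp (hF.trans h1)
  set S : Finset ℕ := (Finset.Icc 1 T).filter
      (fun t => ε/2 ≤ K (w t) ∧ η ≤ |a + b * w t|) with hSdef
  set B : Set ℝ := {u : ℝ | |a + b*u| < η + Δ} with hBdef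
  -- cover
  have hcover : F \ (B ∪ {0}) ⊆ ⋃ t ∈ S, Set.Ioc (w t - Δ) (w t) := by
    rintro u ⟨⟨⟨huz, huz1⟩, huK⟩, hnot⟩
    have hnB : ¬(|a + b*u| < η + Δ) := fun hmem => hnot (Or.inl hmem)
    have hn0 : u ≠ 0 := fun hmem => hnot (Or.inr hmem)
    have hu1 : |u| ≤ 1 := by
      rcases hzcase with ⟨hz0, _⟩|⟨hz0, _, _⟩ <;> rw [hz0] at huz huz1 <;>
        rw [abs_le] <;> constructor <;> linarith
    set c : ℝ := (T:ℝ)*(x + h*u) with hcdef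
    have hc0 : 0 < c := by
      rcases hzcase with ⟨hz0, hx2⟩|⟨hz0, hx2, hx3⟩
      · rw [hz0] at huz
        have hu0 : 0 < u := lt_of_le_of_ne huz (Ne.symm hn0)
        have : 0 < x + h*u := by nlinarith
        positivity
      · rw [hz0] at huz
        have : -h ≤ h*u := by nlinarith
        have : 0 < x + h*u := by linarith
        positivity
    have hceil1 : (0:ℤ) < ⌈c⌉ := Int.lt_ceil.mpr (by push_cast; exact hc0)
    have hceilT : ⌈c⌉ ≤ (T:ℤ) := by
      apply Int.ceil_le.mpr
      push_cast
      rcases hzcase with ⟨hz0, hx2⟩|⟨hz0, hx2, hx3⟩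
      · rw [hz0] at huz1
        have h1 : x + h*u ≤ 1 := by nlinarith
        rw [hcdef]
        nlinarith [mul_le_mul_of_nonneg_left h1 hT0.le]
      · rw [hz0] at huz1
        have h1 : x + h*u ≤ 1 := by nlinarith
        rw [hcdef]
        nlinarith [mul_le_mul_of_nonneg_left h1 hT0.le]
    set tN : ℕ := (⌈c⌉).toNat with htNdef
    have htc : ((tN:ℕ):ℝ) = ((⌈c⌉:ℤ):ℝ) := by
      have := Int.toNat_of_nonneg (by omega : (0:ℤ) ≤ ⌈c⌉)
      exact_mod_cast congrArg (Int.cast : ℤ → ℝ) this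
    have htmem : tN ∈ Finset.Icc 1 T := by
      rw [Finset.mem_Icc]
      constructor <;> omega
    have hwtu : w tN - u = (((⌈c⌉:ℤ):ℝ) - c)/((T:ℝ)*h) := by
      rw [hwdef]
      simp only
      rw [htc, hcdef]
      field_simp
      ring
    have hge : 0 ≤ w tN - u := by
      rw [hwtu]
      apply div_nonneg
      · linarith [Int.le_ceil c]
      · positivity
    have hlt : w tN - u < Δ := by
      rw [hwtu, hΔdef, ← one_div]
      have h5 : ((⌈c⌉:ℤ):ℝ) - c < 1 := by linarith [Int.ceil_lt_add_one c]
      exact (div_lt_div_iff_of_pos_right hTh0).mpr h5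
    have hKw : ε/2 ≤ K (w tN) := by
      have h1 := hlip (w tN) u
      have h2 : |w tN - u| = w tN - u := abs_of_nonneg hge
      rw [h2] at h1
      have h3 : Λ₁ * (w tN - u) ≤ Λ₁ * Δ := by gcongr
      have h4 := (abs_le.mp h1).1
      linarith
    have hroot : η ≤ |a + b * w tN| := by
      have h1 : |a + b*u| ≤ |a + b*w tN| + |b*(w tN - u)| := by
        have he : a + b*u = (a + b*w tN) + (-(b*(w tN - u))) := by ring
        have h0 := abs_add_le (a + b*w tN) (-(b*(w tN - u)))
        rw [abs_neg] at h0
        rw [he]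
        exact h0
      have h2 : |b*(w tN - u)| ≤ Δ := by
        rw [abs_mul, abs_of_nonneg hge]
        exact le_trans (mul_le_mul hb1 hlt.le hge zero_le_one) (by rw [one_mul])
      have h3 : η + Δ ≤ |a + b*u| := not_lt.mp hnB
      linarith
    have htS : tN ∈ S := by rw [hSdef, Finset.mem_filter]; exact ⟨htmem, ⟨hKw, hroot⟩⟩
    exact Set.mem_iUnion₂.mpr ⟨tN, htS, ⟨by linarith, by linarith⟩⟩
  -- measure of the bad set
  have hBvol : volume F ≤ volume (F \ (B ∪ {0})) + ENNReal.ofReal (4*(η+Δ)) := by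
    by_cases hbb : 1/2 ≤ |b|
    · have hb0 : b ≠ 0 := by
        intro hb0; rw [hb0] at hbb; norm_num at hbb
      have habs : 0 < |b| := abs_pos.mpr hb0
      have hBball : B = Metric.ball (-a/b) ((η+Δ)/|b|) := by
        ext u
        simp only [hBdef, Set.mem_setOf_eq, Metric.mem_ball, Real.dist_eq]
        rw [show u - (-a/b) = (a + b*u)/b by field_simp; ring, abs_div, div_lt_div_iff₀ habs habs]
        constructor
        · intro h1; nlinarith [abs_nonneg (a+b*u)]
        · intro h1; nlinarith [abs_nonneg (a+b*u)]
      have hvolB : volume B ≤ ENNReal.ofReal (4*(η+Δ)) := by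
        rw [hBball, Real.volume_ball]
        apply ENNReal.ofReal_le_ofReal
        have hq : (η+Δ)/|b| ≤ 2*(η+Δ) := by
          rw [div_le_iff₀ habs]
          nlinarith [hηpos, hΔpos]
        linarith
      calc volume F ≤ volume ((F \ (B ∪ {0})) ∪ (B ∪ {0})) :=
            measure_mono (Set.subset_diff_union _ _)
      _ ≤ volume (F \ (B ∪ {0})) + volume (B ∪ {0}) := measure_union_le _ _
      _ ≤ volume (F \ (B ∪ {0})) + (volume B + volume ({0}:Set ℝ)) := by
            gcongr; exact measure_union_le _ _
      _ = volume (F \ (B ∪ {0})) + volume B := by rw [Real.volume_singleton, add_zero]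
      _ ≤ volume (F \ (B ∪ {0})) + ENNReal.ofReal (4*(η+Δ)) := by gcongr
    · push_neg at hbb
      have hsub : F ⊆ (F \ (B ∪ {0})) ∪ {0} := by
        intro u hu
        by_cases hu0 : u = 0
        · exact Or.inr hu0
        · refine Or.inl ⟨hu, ?_⟩
          rintro (hB | h0)
          · -- u ∈ B impossible
            rw [hBdef, Set.mem_setOf_eq] at hB
            obtain ⟨⟨huz, huz1⟩, -⟩ := hu
            have hu1 : |u| ≤ 1 := by
              rcases hzcase with ⟨hz0, _⟩|⟨hz0, _, _⟩ <;> rw [hz0] at huz huz1 <;>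
                rw [abs_le] <;> constructor <;> linarith
            have h1 : |a| ≤ |a + b*u| + |b*u| := by
              calc |a| = |(a + b*u) + (-(b*u))| := by ring_nf
              _ ≤ |a + b*u| + |(-(b*u))| := abs_add_le _ _
              _ = |a + b*u| + |b*u| := by rw [abs_neg]
            have h2 : |b*u| ≤ 1/2 := by
              rw [abs_mul]
              have : |b| * |u| ≤ (1/2)*1 :=
                mul_le_mul hbb.le hu1 (abs_nonneg _) (by norm_num)
              linarith
            have h3 : η + Δ ≤ 1/16 := by
              rw [hηdef]; rw [hηdef] at hΔδ; linarith
            have hA : |a| < 9/16 := by linarith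
            have ha2 : |a| * |a| < (9/16)*(9/16) := mul_self_lt_mul_self (abs_nonneg a) hA
            have hb2 : |b| * |b| < (1/2)*(1/2) := mul_self_lt_mul_self (abs_nonneg b) hbb
            nlinarith [sq_abs a, sq_abs b]
          · exact hu0 h0
      calc volume F ≤ volume ((F \ (B ∪ {0})) ∪ {0}) := measure_mono hsub
      _ ≤ volume (F \ (B ∪ {0})) + volume ({0}:Set ℝ) := measure_union_le _ _
      _ = volume (F \ (B ∪ {0})) := by rw [Real.volume_singleton, add_zero]
      _ ≤ _ := le_self_add
  -- counting
  have hcard : δ/2 ≤ (S.card : ℝ) * Δ := by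
    have h1 : volume (F \ (B ∪ {0})) ≤ ENNReal.ofReal ((S.card:ℝ)*Δ) := by
      calc volume (F \ (B ∪ {0})) ≤ volume (⋃ t ∈ S, Set.Ioc (w t - Δ) (w t)) :=
            measure_mono hcover
      _ ≤ ∑ t ∈ S, volume (Set.Ioc (w t - Δ) (w t)) := measure_biUnion_finset_le _ _
      _ = ∑ t ∈ S, ENNReal.ofReal Δ := by
            apply Finset.sum_congr rfl
            intro t _
            rw [Real.volume_Ioc, sub_sub_cancel]
      _ = S.card • ENNReal.ofReal Δ := Finset.sum_const _
      _ = ENNReal.ofReal ((S.card:ℝ)*Δ) := by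
            rw [nsmul_eq_mul, ENNReal.ofReal_mul (Nat.cast_nonneg _), ENNReal.ofReal_natCast]
    have h2 : ENNReal.ofReal δ ≤ ENNReal.ofReal ((S.card:ℝ)*Δ + 4*(η+Δ)) := by
      calc ENNReal.ofReal δ ≤ volume F := hF
      _ ≤ volume (F \ (B ∪ {0})) + ENNReal.ofReal (4*(η+Δ)) := hBvol
      _ ≤ ENNReal.ofReal ((S.card:ℝ)*Δ) + ENNReal.ofReal (4*(η+Δ)) := by gcongr
      _ = ENNReal.ofReal ((S.card:ℝ)*Δ + 4*(η+Δ)) := by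
            rw [← ENNReal.ofReal_add (by positivity) (by positivity)]
    have h3 : δ ≤ (S.card:ℝ)*Δ + 4*(η+Δ) :=
      (ENNReal.ofReal_le_ofReal_iff (by positivity)).mp h2
    rw [hηdef] at h3; rw [hηdef] at hΔδ
    nlinarith [Nat.cast_nonneg (α := ℝ) S.card]
  -- final sum bound
  have hsum : (S.card : ℝ) * (η^2 * (ε/2)) ≤ ∑ t ∈ Finset.Icc 1 T,
      (a + b * w t)^2 * K (w t) := by
    calc (S.card : ℝ) * (η^2 * (ε/2)) = ∑ _t ∈ S, η^2 * (ε/2) := by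
          rw [Finset.sum_const, nsmul_eq_mul]
    _ ≤ ∑ t ∈ S, (a + b * w t)^2 * K (w t) := by
          apply Finset.sum_le_sum
          intro t ht
          rw [hSdef, Finset.mem_filter] at ht
          obtain ⟨-, hK2, hr⟩ := ht
          have h1 : η^2 ≤ (a + b*w t)^2 := by
            have := pow_le_pow_left₀ hηpos.le hr 2
            rwa [sq_abs] at this
          exact mul_le_mul h1 hK2 (by positivity) (sq_nonneg _)
    _ ≤ ∑ t ∈ Finset.Icc 1 T, (a + b * w t)^2 * K (w t) := by
          apply Finset.sum_le_sum_of_subset_of_nonneg (Finset.filter_subset _ _)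
          intro t _ _
          exact mul_nonneg (sq_nonneg _) (hKnn _)
  calc δ/2 * (η^2 * (ε/2)) ≤ ((S.card:ℝ)*Δ) * (η^2 * (ε/2)) := by
        apply mul_le_mul_of_nonneg_right hcard (by positivity)
  _ = Δ * ((S.card:ℝ) * (η^2 * (ε/2))) := by ring
  _ ≤ Δ * ∑ t ∈ Finset.Icc 1 T, (a + b * w t)^2 * K (w t) :=
        mul_le_mul_of_nonneg_left hsum hΔpos.le

set_option maxHeartbeats 1000000 in
/-- Uniform lower bound on the smallest eigenvalue of the design matrices:
there are `λ₀ > 0` and `T₀` such that, for all `T ≥ T₀` and every `x ∈ [0,1]`,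
every (real) eigenvalue of `S_{T,x}` is at least `λ₀`. -/
theorem design_matrix_eigenvalue_lower_bound
    (K : ℝ → ℝ) (Kbar μb Λ₁ s : ℝ) (h : ℕ → ℝ)
    (hs : 2 < s)
    (hKnn : ∀ u, 0 ≤ K u)
    (hKbd : ∀ u, |K u| ≤ Kbar)
    (hKint : (∫ u, |K u| ^ s) ≤ μb)
    (hΛ : 1 ≤ Λ₁)
    (hsupp : ∀ u : ℝ, 1 < |u| → K u = 0)
    (hlip : ∀ u u' : ℝ, |K u - K u'| ≤ Λ₁ * |u - u'|)
    (hposset : ∀ x ∈ Set.Icc (0 : ℝ) 1, 0 < volume {u ∈ Gdom x | 0 < K u})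
    (hpos : ∀ T, 0 < h T)
    (h0 : Tendsto h atTop (nhds 0))
    (hTh : Tendsto (fun T : ℕ => (T : ℝ) * h T) atTop atTop) :
    ∃ lam₀ : ℝ, 0 < lam₀ ∧ ∃ T₀ : ℕ, ∀ T ≥ T₀, ∀ x ∈ Set.Icc (0 : ℝ) 1,
      ∀ t ∈ spectrum ℝ (Sdesign K (h T) T x), lam₀ ≤ t := by
  have hG0 : Gdom 0 = Set.Icc (0:ℝ) 1 := by simp [Gdom]
  have hG1 : Gdom 1 = Set.Icc (-1:ℝ) 0 := by norm_num [Gdom]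
  obtain ⟨ε0, hε0, hv0⟩ := exists_level K (Set.Icc 0 1)
    (by rw [← hG0]; exact hposset 0 (by norm_num))
  obtain ⟨ε1, hε1, hv1⟩ := exists_level K (Set.Icc (-1) 0)
    (by rw [← hG1]; exact hposset 1 (by norm_num))
  set ε : ℝ := min ε0 ε1 with hεdef
  have hε : 0 < ε := lt_min hε0 hε1
  have hv0' : 0 < volume {u ∈ Set.Icc (0:ℝ) 1 | ε ≤ K u} :=
    lt_of_lt_of_le hv0 (measure_mono (fun u hu => ⟨hu.1, le_trans (min_le_left _ _) hu.2⟩))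
  have hv1' : 0 < volume {u ∈ Set.Icc (-1:ℝ) 0 | ε ≤ K u} :=
    lt_of_lt_of_le hv1 (measure_mono (fun u hu => ⟨hu.1, le_trans (min_le_right _ _) hu.2⟩))
  have hfin0 : volume {u ∈ Set.Icc (0:ℝ) 1 | ε ≤ K u} ≠ ⊤ :=
    ((measure_mono (Set.sep_subset _ _)).trans_lt measure_Icc_lt_top).ne
  have hfin1 : volume {u ∈ Set.Icc (-1:ℝ) 0 | ε ≤ K u} ≠ ⊤ :=
    ((measure_mono (Set.sep_subset _ _)).trans_lt measure_Icc_lt_top).ne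
  set δ : ℝ := min (volume {u ∈ Set.Icc (0:ℝ) 1 | ε ≤ K u}).toReal
      (volume {u ∈ Set.Icc (-1:ℝ) 0 | ε ≤ K u}).toReal with hδdef
  have hδpos : 0 < δ :=
    lt_min (ENNReal.toReal_pos hv0'.ne' hfin0) (ENNReal.toReal_pos hv1'.ne' hfin1)
  have hF0 : ENNReal.ofReal δ ≤ volume {u ∈ Set.Icc (0:ℝ) 1 | ε ≤ K u} := by
    calc ENNReal.ofReal δ
        ≤ ENNReal.ofReal (volume {u ∈ Set.Icc (0:ℝ) 1 | ε ≤ K u}).toReal :=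
          ENNReal.ofReal_le_ofReal (min_le_left _ _)
    _ = volume {u ∈ Set.Icc (0:ℝ) 1 | ε ≤ K u} := ENNReal.ofReal_toReal hfin0
  have hF1 : ENNReal.ofReal δ ≤ volume {u ∈ Set.Icc (-1:ℝ) 0 | ε ≤ K u} := by
    calc ENNReal.ofReal δ
        ≤ ENNReal.ofReal (volume {u ∈ Set.Icc (-1:ℝ) 0 | ε ≤ K u}).toReal :=
          ENNReal.ofReal_le_ofReal (min_le_right _ _)
    _ = volume {u ∈ Set.Icc (-1:ℝ) 0 | ε ≤ K u} := ENNReal.ofReal_toReal hfin1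
  refine ⟨δ/2 * ((δ/32)^2 * (ε/2)), by positivity, ?_⟩
  have hev : ∀ᶠ T : ℕ in atTop,
      h T ≤ 1/4 ∧ 2*Λ₁/ε ≤ (T:ℝ)*h T ∧ 32/δ ≤ (T:ℝ)*h T := by
    have e1 : ∀ᶠ T in atTop, h T ≤ 1/4 :=
      h0.eventually (eventually_le_nhds (by norm_num))
    have e2 := hTh.eventually_ge_atTop (2*Λ₁/ε)
    have e3 := hTh.eventually_ge_atTop (32/δ)
    filter_upwards [e1, e2, e3] with T h1 h2 h3
    exact ⟨h1, h2, h3⟩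
  obtain ⟨T₀, hT₀⟩ := eventually_atTop.mp hev
  refine ⟨T₀, fun T hT x hx μ hμ => ?_⟩
  obtain ⟨hh4, hTh1, hTh2⟩ := hT₀ T hT
  have hTh0 : 0 < (T:ℝ)*h T := lt_of_lt_of_le (by positivity) hTh2
  -- eigenvector
  have hE : Module.End.HasEigenvalue (Matrix.toLinAlgEquiv' (Sdesign K (h T) T x)) μ :=
    Module.End.hasEigenvalue_iff_mem_spectrum.mpr (by rwa [AlgEquiv.spectrum_eq])
  obtain ⟨v, hv⟩ := hE.exists_hasEigenvector
  have hmv : (Sdesign K (h T) T x).mulVec v = μ • v := by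
    rw [← Matrix.toLinAlgEquiv'_apply]; exact hv.apply_eq_smul
  have hn2 : 0 < v 0^2 + v 1^2 := by
    rcases Function.ne_iff.mp hv.2 with ⟨i, hi⟩
    have hi' : v i ≠ 0 := by simpa using hi
    have hsq : 0 < (v i)^2 := lt_of_le_of_ne (sq_nonneg _) (Ne.symm (pow_ne_zero 2 hi'))
    fin_cases i
    · exact add_pos_of_pos_of_nonneg hsq (sq_nonneg _)
    · exact add_pos_of_nonneg_of_pos (sq_nonneg _) hsq
  set nm : ℝ := Real.sqrt (v 0^2 + v 1^2) with hnmdef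
  have hnm : 0 < nm := Real.sqrt_pos.mpr hn2
  have hnmsq : nm^2 = v 0^2 + v 1^2 := Real.sq_sqrt hn2.le
  have hab : (v 0/nm)^2 + (v 1/nm)^2 = 1 := by
    field_simp
    linarith [hnmsq]
  -- branch
  obtain ⟨z, hzcase, hFz⟩ : ∃ z : ℝ, ((z = 0 ∧ x ≤ 1/2) ∨ (z = -1 ∧ 1/2 ≤ x ∧ x ≤ 1)) ∧
      ENNReal.ofReal δ ≤ volume {u ∈ Set.Icc z (z+1) | ε ≤ K u} := by
    rcases le_or_gt x (1/2) with hx2 | hx2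
    · exact ⟨0, Or.inl ⟨rfl, hx2⟩, by rw [show (0:ℝ)+1 = 1 by norm_num]; exact hF0⟩
    · exact ⟨-1, Or.inr ⟨rfl, hx2.le, hx.2⟩, by rw [show (-1:ℝ)+1 = 0 by norm_num]; exact hF1⟩
  have hcore := core_bound K Λ₁ ε δ hΛ hε hδpos hKnn hlip T (h T) x
    (v 0/nm) (v 1/nm) z (hpos T) hzcase hx.1 hab hFz hh4 hTh1 hTh2
  -- identify the quadratic form with μ
  have hq := quad_form K (h T) T x v
  have hvMv : v ⬝ᵥ (Sdesign K (h T) T x).mulVec v = μ * (v 0^2 + v 1^2) := by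
    rw [hmv]
    simp [dotProduct, Fin.sum_univ_two, Pi.smul_apply, smul_eq_mul]
    ring
  have hsum_eq : ∑ t ∈ Finset.Icc 1 T,
        (v 0/nm + v 1/nm * (((t:ℝ)/T - x)/h T))^2 * K (((t:ℝ)/T - x)/h T)
      = (∑ t ∈ Finset.Icc 1 T,
        (v 0 + v 1 * (((t:ℝ)/T - x)/h T))^2 * K (((t:ℝ)/T - x)/h T)) / (v 0^2 + v 1^2) := by
    rw [Finset.sum_div]
    apply Finset.sum_congr rfl
    intro t _
    rw [show v 0/nm + v 1/nm * (((t:ℝ)/T - x)/h T)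
          = (v 0 + v 1 * (((t:ℝ)/T - x)/h T))/nm from by ring,
       div_pow, hnmsq, div_mul_eq_mul_div]
  calc δ/2 * ((δ/32)^2 * (ε/2))
      ≤ ((T:ℝ)*h T)⁻¹ * ∑ t ∈ Finset.Icc 1 T,
        (v 0/nm + v 1/nm * (((t:ℝ)/T - x)/h T))^2 * K (((t:ℝ)/T - x)/h T) := hcore
  _ = (((T:ℝ)*h T)⁻¹ * ∑ t ∈ Finset.Icc 1 T,
        (v 0 + v 1 * (((t:ℝ)/T - x)/h T))^2 * K (((t:ℝ)/T - x)/h T)) / (v 0^2 + v 1^2) := by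
        rw [hsum_eq]; ring
  _ = (μ * (v 0^2 + v 1^2)) / (v 0^2 + v 1^2) := by rw [← hq, hvMv]
  _ = μ := by field_simp

end Aux
end
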